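/- Let Σ_I and Σ_O be nonempty finite types, let L(φ) and L(φ^v) be languages of infinite traces over Σ = Σ_I × Σ_O, let d^σ be a distance function on pairs of infinite output traces (functions ℕ → Σ_O) with values in ℕ∞ satisfying the positivity property that d^σ(y, y') ≠ 0 whenever y ≠ y', and let d^L be a language distance function. Let S be a reactive system (Mealy machine) with input alphabet Σ_I × Σ_O and output alphabet Σ_O, and suppose S is an optimal generic shield, i.e., for all x : ℕ → Σ_I and y : ℕ → Σ_O with (x || y) ∈ L(φ^v) one has d^L(L(φ), x || S(x || y)) = 0 and d^σ(y, S(x || y)) ≤ d^L(L(φ), x || y). Then S cannot deviate from the design's output before a specification violation is unavoidable: for every trace x || y ∈ L(φ^v) and every n : ℕ, if there exists a trace x' || y' ∈ L(φ^v) that agrees with x || y at all positions i < n and satisfies d^L(L(φ), x' || y') = 0, then S(x || y)(i) = y(i) for all i < n. -/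

import Mathlib

/-- A reactive system (Mealy machine) with input alphabet `A` and output alphabet `B`. -/
structure Mealy (A : Type*) (B : Type*) where
  Q : Type*
  q0 : Q
  step : Q → A → Q
  emit : Q → A → B

/-- The state sequence (run) induced by an infinite input trace. -/
def Mealy.run {A B : Type*} (M : Mealy A B) (x : ℕ → A) : ℕ → M.Q
  | 0 => M.q0
  | n + 1 => M.step (M.run x n) (x n)

/-- The output trace produced on an infinite input trace. -/
def Mealy.output {A B : Type*} (M : Mealy A B) (x : ℕ → A) (i : ℕ) : B :=
  M.emit (M.run x i) (x i)

/-- The combined trace `x || y`. -/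
def comb {A B : Type*} (x : ℕ → A) (y : ℕ → B) : ℕ → A × B :=
  fun i => (x i, y i)

/-- An optimal generic shield cannot deviate from the design's output before a
specification violation by the design is unavoidable. -/
theorem optimal_shield_no_premature_deviation
    {SI SO : Type*} [Fintype SI] [Fintype SO] [Nonempty SI] [Nonempty SO]
    (Lφ Lφv : Set (ℕ → SI × SO))
    (dσ : (ℕ → SO) → (ℕ → SO) → ℕ∞)
    (hpos : ∀ y y' : ℕ → SO, y ≠ y' → dσ y y' ≠ 0)
    (dL : Set (ℕ → SI × SO) → (ℕ → SI × SO) → ℕ∞)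
    (hLDF : ∀ (L : Set (ℕ → SI × SO)) (σ : ℕ → SI × SO), σ ∈ L → dL L σ = 0)
    (S : Mealy (SI × SO) SO)
    (hshield : ∀ (x : ℕ → SI) (y : ℕ → SO), comb x y ∈ Lφv →
      dL Lφ (comb x (S.output (comb x y))) = 0 ∧
      dσ y (S.output (comb x y)) ≤ dL Lφ (comb x y)) :
    ∀ (x : ℕ → SI) (y : ℕ → SO), comb x y ∈ Lφv → ∀ n : ℕ,
      (∃ (x' : ℕ → SI) (y' : ℕ → SO), comb x' y' ∈ Lφv ∧
        (∀ i < n, x i = x' i ∧ y i = y' i) ∧ dL Lφ (comb x' y') = 0) →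
      ∀ i < n, S.output (comb x y) i = y i := by
  have runeq : ∀ (u v : ℕ → SI × SO) (n : ℕ), (∀ i < n, u i = v i) →
      S.run u n = S.run v n := by
    intro u v n
    induction n with
    | zero => intro _; rfl
    | succ k ih =>
      intro h
      simp only [Mealy.run]
      rw [ih (fun i hi => h i (Nat.lt_succ_of_lt hi)), h k (Nat.lt_succ_self k)]
  intro x y hxy n ⟨x', y', hxy', hpre, hdL0⟩ i hi
  obtain ⟨_, hle⟩ := hshield x' y' hxy'
  rw [hdL0] at hle
  have hy' : y' = S.output (comb x' y') := by
    by_contra h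
    exact hpos _ _ h (le_antisymm hle zero_le)
  have hagree : ∀ j < n, comb x y j = comb x' y' j := by
    intro j hj
    obtain ⟨h1, h2⟩ := hpre j hj
    simp [comb, h1, h2]
  have : S.output (comb x y) i = S.output (comb x' y') i := by
    simp only [Mealy.output]
    rw [runeq _ _ i (fun j hj => hagree j (hj.trans hi)), hagree i hi]
  rw [this, ← hy', (hpre i hi).2]
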